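/- Let ℓ, R₁, R₂ > 0, α₁ := ℓ/R₁ + 1, α₂ := ℓ/R₂ + 1, γ := (α₁α₂ − 1)/ℓ, and let λ ∈ (0,1) satisfy λ + λ⁻¹ = 4α₁α₂ − 2. Consider the matrices M := [[2α₁α₂−1, 2α₂ℓ],[2α₁γ, 2α₁α₂−1]] and N := [[2α₁α₂−1, 2α₁ℓ],[2α₂γ, 2α₁α₂−1]] (the differentials of the square of the billiard map at the two bounces of a period-two orbit), and the matrix D₁ := −[[α₁, ℓ],[γ, α₂]]. Then: (i) every eigenvector (C₁ₛˢ, C₁φˢ) of M with eigenvalue λ has C₁φˢ ≠ 0 and C₁ₛˢ/C₁φˢ = −4α₂λℓ/(1−λ²) < 0, and every eigenvector (C₁ₛᵘ, C₁φᵘ) of M with eigenvalue λ⁻¹ has C₁ₛᵘ/C₁φᵘ = 4α₂λℓ/(1−λ²) > 0; (ii) every λ-eigenvector of N has coordinate ratio −4α₁λℓ/(1−λ²) and every λ⁻¹-eigenvector of N has ratio 4α₁λℓ/(1−λ²); (iii) writing (C₂ₛˢ, C₂φˢ) := D₁·(C₁ₛˢ, C₁φˢ) and (C₂ₛᵘ,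 C₂φᵘ) := D₁·(C₁ₛᵘ, C₁φᵘ), one has C₂ₛˢ/C₁φˢ = 2λℓ/(1−λ) > 0 and C₂ₛᵘ/C₁φᵘ = −2ℓ/(1−λ) < 0. -/

import Mathlib

lemma eig_row (d b t : ℝ) (v : Fin 2 → ℝ) (hv : v ≠ 0)
    (h0 : d * v 0 + b * v 1 = t * v 0) (hd : d ≠ t) :
    v 1 ≠ 0 ∧ v 0 = (b / (t - d)) * v 1 := by
  have htd : t - d ≠ 0 := sub_ne_zero.mpr (Ne.symm hd)
  have hv1 : v 1 ≠ 0 := by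
    intro h1
    apply hv
    have h00 : v 0 = 0 := by
      have h2 : (t - d) * v 0 = 0 := by rw [h1] at h0; nlinarith [h0]
      exact (mul_eq_zero.mp h2).resolve_left htd
    funext i; fin_cases i <;> simp [h00, h1]
  refine ⟨hv1, ?_⟩
  field_simp
  linear_combination -h0

set_option maxHeartbeats 1000000 in
theorem statement_14 (ℓ R₁ R₂ lam : ℝ) (hℓ : 0 < ℓ) (hR₁ : 0 < R₁) (hR₂ : 0 < R₂)
    (hlam₀ : 0 < lam) (hlam₁ : lam < 1)
    (α₁ α₂ γ : ℝ) (hα₁ : α₁ = ℓ / R₁ + 1) (hα₂ : α₂ = ℓ / R₂ + 1)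
    (hγ : γ = (α₁ * α₂ - 1) / ℓ)
    (htrace : lam + lam⁻¹ = 4 * α₁ * α₂ - 2) :
    let M : Matrix (Fin 2) (Fin 2) ℝ :=
      !![2 * α₁ * α₂ - 1, 2 * α₂ * ℓ; 2 * α₁ * γ, 2 * α₁ * α₂ - 1]
    let N : Matrix (Fin 2) (Fin 2) ℝ :=
      !![2 * α₁ * α₂ - 1, 2 * α₁ * ℓ; 2 * α₂ * γ, 2 * α₁ * α₂ - 1]
    let D₁ : Matrix (Fin 2) (Fin 2) ℝ := -!![α₁, ℓ; γ, α₂]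
    -- (i) stable and unstable eigenvectors of `M`
    (∀ v : Fin 2 → ℝ, v ≠ 0 → M.mulVec v = lam • v →
      v 1 ≠ 0 ∧ v 0 / v 1 = -(4 * α₂ * lam * ℓ) / (1 - lam ^ 2) ∧ v 0 / v 1 < 0) ∧
    (∀ v : Fin 2 → ℝ, v ≠ 0 → M.mulVec v = lam⁻¹ • v →
      v 1 ≠ 0 ∧ v 0 / v 1 = 4 * α₂ * lam * ℓ / (1 - lam ^ 2) ∧ 0 < v 0 / v 1) ∧
    -- (ii) stable and unstable eigenvectors of `N`
    (∀ v : Fin 2 → ℝ, v ≠ 0 → N.mulVec v = lam • v →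
      v 1 ≠ 0 ∧ v 0 / v 1 = -(4 * α₁ * lam * ℓ) / (1 - lam ^ 2) ∧ v 0 / v 1 < 0) ∧
    (∀ v : Fin 2 → ℝ, v ≠ 0 → N.mulVec v = lam⁻¹ • v →
      v 1 ≠ 0 ∧ v 0 / v 1 = 4 * α₁ * lam * ℓ / (1 - lam ^ 2) ∧ 0 < v 0 / v 1) ∧
    -- (iii) the images under `D₁`
    (∀ v : Fin 2 → ℝ, v ≠ 0 → M.mulVec v = lam • v →
      (D₁.mulVec v) 0 / v 1 = 2 * lam * ℓ / (1 - lam) ∧ 0 < (D₁.mulVec v) 0 / v 1) ∧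
    (∀ u : Fin 2 → ℝ, u ≠ 0 → M.mulVec u = lam⁻¹ • u →
      (D₁.mulVec u) 0 / u 1 = -(2 * ℓ) / (1 - lam) ∧ (D₁.mulVec u) 0 / u 1 < 0) := by
  intro M N D₁
  have hα₁' : 1 < α₁ := by rw [hα₁]; have := div_pos hℓ hR₁; linarith
  have hα₂' : 1 < α₂ := by rw [hα₂]; have := div_pos hℓ hR₂; linarith
  have hlam : lam ≠ 0 := ne_of_gt hlam₀
  have hmul : lam * lam⁻¹ = 1 := mul_inv_cancel₀ hlam
  have hinv1 : 1 < lam⁻¹ := by nlinarith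
  have hlt : lam < lam⁻¹ := by linarith
  have hsq : (0:ℝ) < 1 - lam ^ 2 := by nlinarith
  have h1l : (0:ℝ) < 1 - lam := by linarith
  have hd1 : 2 * α₁ * α₂ - 1 ≠ lam := by intro h; rw [← h] at htrace; nlinarith
  have hd2 : 2 * α₁ * α₂ - 1 ≠ lam⁻¹ := by intro h; rw [← h] at htrace; nlinarith
  have hden1 : lam - (2 * α₁ * α₂ - 1) ≠ 0 := sub_ne_zero.mpr (Ne.symm hd1)
  have hden2 : lam⁻¹ - (2 * α₁ * α₂ - 1) ≠ 0 := sub_ne_zero.mpr (Ne.symm hd2)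
  have key : 4 * (α₁ * α₂) * lam = (1 + lam) ^ 2 := by
    have h := htrace
    field_simp at h
    nlinarith [h]
  -- constant identities
  have hc1 : 2 * α₂ * ℓ / (lam - (2 * α₁ * α₂ - 1)) = -(4 * α₂ * lam * ℓ) / (1 - lam ^ 2) := by
    rw [div_eq_div_iff hden1 (ne_of_gt hsq)]
    linear_combination (-(2 * α₂ * ℓ)) * key
  have hc2 : 2 * α₂ * ℓ / (lam⁻¹ - (2 * α₁ * α₂ - 1)) = 4 * α₂ * lam * ℓ / (1 - lam ^ 2) := by
    rw [div_eq_div_iff hden2 (ne_of_gt hsq)]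
    linear_combination (2 * α₂ * ℓ) * key + (-(4 * α₂ * ℓ)) * hmul
  have hc3 : 2 * α₁ * ℓ / (lam - (2 * α₁ * α₂ - 1)) = -(4 * α₁ * lam * ℓ) / (1 - lam ^ 2) := by
    rw [div_eq_div_iff hden1 (ne_of_gt hsq)]
    linear_combination (-(2 * α₁ * ℓ)) * key
  have hc4 : 2 * α₁ * ℓ / (lam⁻¹ - (2 * α₁ * α₂ - 1)) = 4 * α₁ * lam * ℓ / (1 - lam ^ 2) := by
    rw [div_eq_div_iff hden2 (ne_of_gt hsq)]
    linear_combination (2 * α₁ * ℓ) * key + (-(4 * α₁ * ℓ)) * hmul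
  refine ⟨?_, ?_, ?_, ?_, ?_, ?_⟩
  · intro v hv heq
    have h0 := congrFun heq 0
    simp [M, Matrix.mulVec, dotProduct, Fin.sum_univ_two] at h0
    obtain ⟨hv1, hratio⟩ := eig_row _ _ _ v hv h0 hd1
    have hr : v 0 / v 1 = -(4 * α₂ * lam * ℓ) / (1 - lam ^ 2) := by
      rw [hratio, mul_div_assoc, div_self hv1, mul_one, hc1]
    refine ⟨hv1, hr, ?_⟩
    rw [hr]; apply div_neg_of_neg_of_pos _ hsq; nlinarith
  · intro v hv heq
    have h0 := congrFun heq 0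
    simp [M, Matrix.mulVec, dotProduct, Fin.sum_univ_two] at h0
    obtain ⟨hv1, hratio⟩ := eig_row _ _ _ v hv h0 hd2
    have hr : v 0 / v 1 = 4 * α₂ * lam * ℓ / (1 - lam ^ 2) := by
      rw [hratio, mul_div_assoc, div_self hv1, mul_one, hc2]
    refine ⟨hv1, hr, ?_⟩
    rw [hr]; apply div_pos _ hsq; nlinarith
  · intro v hv heq
    have h0 := congrFun heq 0
    simp [N, Matrix.mulVec, dotProduct, Fin.sum_univ_two] at h0
    obtain ⟨hv1, hratio⟩ := eig_row _ _ _ v hv h0 hd1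
    have hr : v 0 / v 1 = -(4 * α₁ * lam * ℓ) / (1 - lam ^ 2) := by
      rw [hratio, mul_div_assoc, div_self hv1, mul_one, hc3]
    refine ⟨hv1, hr, ?_⟩
    rw [hr]; apply div_neg_of_neg_of_pos _ hsq; nlinarith
  · intro v hv heq
    have h0 := congrFun heq 0
    simp [N, Matrix.mulVec, dotProduct, Fin.sum_univ_two] at h0
    obtain ⟨hv1, hratio⟩ := eig_row _ _ _ v hv h0 hd2
    have hr : v 0 / v 1 = 4 * α₁ * lam * ℓ / (1 - lam ^ 2) := by
      rw [hratio, mul_div_assoc, div_self hv1, mul_one, hc4]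
    refine ⟨hv1, hr, ?_⟩
    rw [hr]; apply div_pos _ hsq; nlinarith
  · intro v hv heq
    have h0 := congrFun heq 0
    simp [M, Matrix.mulVec, dotProduct, Fin.sum_univ_two] at h0
    obtain ⟨hv1, hratio⟩ := eig_row _ _ _ v hv h0 hd1
    have hD : (D₁.mulVec v) 0 = -(α₁ * v 0 + ℓ * v 1) := by
      simp [D₁, Matrix.mulVec, dotProduct, Fin.sum_univ_two]; ring
    have hC : (D₁.mulVec v) 0 = (2 * lam * ℓ / (1 - lam)) * v 1 := by
      rw [hD, hratio]
      field_simp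
      have e : α₁ * 2 * α₂ / (lam - (α₁ * 2 * α₂ - 1)) = -(4 * α₁ * α₂ * lam) / (1 - lam ^ 2) := by
        rw [div_eq_div_iff (by convert hden1 using 2; ring) hsq.ne']
        linear_combination (-(2 * α₁ * α₂)) * key
      rw [e]
      field_simp
      linear_combination (1 - lam) * key
    have hr : (D₁.mulVec v) 0 / v 1 = 2 * lam * ℓ / (1 - lam) := by
      rw [hC, mul_div_assoc, div_self hv1, mul_one]
    refine ⟨hr, ?_⟩
    rw [hr]; apply div_pos _ h1l; nlinarith
  · intro u hu heq
    have h0 := congrFun heq 0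
    simp [M, Matrix.mulVec, dotProduct, Fin.sum_univ_two] at h0
    obtain ⟨hu1, hratio⟩ := eig_row _ _ _ u hu h0 hd2
    have hD : (D₁.mulVec u) 0 = -(α₁ * u 0 + ℓ * u 1) := by
      simp [D₁, Matrix.mulVec, dotProduct, Fin.sum_univ_two]; ring
    have hratio' : u 0 = (4 * α₂ * lam * ℓ / (1 - lam ^ 2)) * u 1 := by rw [hratio, hc2]
    have hC : (D₁.mulVec u) 0 = (-(2 * ℓ) / (1 - lam)) * u 1 := by
      rw [hD, hratio']
      field_simp
      linear_combination (-(1 - lam)) * key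
    have hr : (D₁.mulVec u) 0 / u 1 = -(2 * ℓ) / (1 - lam) := by
      rw [hC, mul_div_assoc, div_self hu1, mul_one]
    refine ⟨hr, ?_⟩
    rw [hr]; apply div_neg_of_neg_of_pos _ h1l; nlinarith
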